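/- Let X ⊆ ℙ(ℂ^{d+1}) be a σ-invariant subset and V ⊆ ℂ^{d+1} a real ℂ-subspace of dimension ℓ := d−k ≥ 1 such that X is hyperbolic with respect to V. Let V_0 ⊆ V be a real subspace with dim V_0 = ℓ−1, and let π = π_{V_0} be the projection π([x̂]) = [P_{V_0^⊥}(x̂)] ∈ ℙ(V_0^⊥) for x̂ ∉ V_0. Then the projected set π(X) ⊆ ℙ(V_0^⊥) is hyperbolic with respect to the real point π(V) := ℙ(V ∩ V_0^⊥): that is, π(V) ∉ π(X), and for every real 2-dimensional subspace U' of V_0^⊥ containing V ∩ V_0^⊥ (i.e., every real projective line through π(V)), every point of π(X) ∩ ℙ(U') is real. (Corollary 3.4, the hyperbolicity assertion.) -/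

import Mathlib

/-!
Points of `ℙ(ℂ^{d+1})` are modelled by their nonzero representative vectors, and subsets of
`ℙ(ℂ^{d+1})` by their cones: sets of nonzero vectors stable under multiplication by nonzero
scalars. `σ` is coordinatewise complex conjugation; a point `[x]` is real iff `σ(x)` is a
scalar multiple of `x`, and a `ℂ`-subspace `W` is real iff `σ(W) = W` (equivalently, `σ`
maps `W` into `W`, `σ` being an involution). `ℂ^{d+1}` carries the standard Hermitian inner
product (`EuclideanSpace`).
-/

noncomputable section

/-- `ℂ^{d+1}` with the standard Hermitian inner product. -/
abbrev EE (d : ℕ) : Type := EuclideanSpace ℂ (Fin (d + 1))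

/-- Coordinatewise complex conjugation `σ`. -/
def conjE {d : ℕ} (x : EE d) : EE d := WithLp.toLp 2 (fun i => (starRingEnd ℂ) (x i))

/-- `x` represents a real point of projective space: `σ(x)` is proportional to `x`. -/
def IsRealPt {d : ℕ} (x : EE d) : Prop := ∃ c : ℂ, conjE x = c • x

/-- A real (σ-invariant) `ℂ`-subspace. -/
def IsRealSub {d : ℕ} (V : Submodule ℂ (EE d)) : Prop := ∀ x ∈ V, conjE x ∈ V

/-- `X` is the cone over a subset of projective space: `0 ∉ X` and `X` is stable under
multiplication by nonzero scalars. -/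
def IsProjCone {d : ℕ} (X : Set (EE d)) : Prop :=
  (0 : EE d) ∉ X ∧ ∀ x ∈ X, ∀ c : ℂ, c ≠ 0 → c • x ∈ X

/-- `X` is σ-invariant. -/
def IsSigmaInv {d : ℕ} (X : Set (EE d)) : Prop := ∀ x ∈ X, conjE x ∈ X

/-- The projection from `ℙ(V₀)`: orthogonal projection onto `V₀ᗮ` (on cones). -/
def projPerp {d : ℕ} (V₀ : Submodule ℂ (EE d)) (x : EE d) : EE d :=
  (V₀ᗮ.orthogonalProjectionOnto x : EE d)

/-- `X` (a cone over a subset of `ℙ(W)`) is hyperbolic, within the ambient subspace `W`,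
with respect to the real subspace `V ≤ W`: `ℙ(V) ∩ X = ∅` and for every real subspace
`U` with `V ≤ U ≤ W` and `dim U = dim V + 1`, every point of `X ∩ ℙ(U)` is real. -/
def HyperbolicIn {d : ℕ} (W : Submodule ℂ (EE d)) (X : Set (EE d))
    (V : Submodule ℂ (EE d)) : Prop :=
  (∀ x ∈ X, x ∉ V) ∧
    ∀ U : Submodule ℂ (EE d), U ≤ W → V ≤ U →
      Module.finrank ℂ U = Module.finrank ℂ V + 1 →
      IsRealSub U → ∀ x ∈ X, x ∈ U → IsRealPt x

/-- Hyperbolicity in the full ambient space `ℙ(ℂ^{d+1})`. -/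
def Hyperbolic {d : ℕ} (X : Set (EE d)) (V : Submodule ℂ (EE d)) : Prop :=
  HyperbolicIn ⊤ X V

/-!
STATEMENT 10 (Corollary 3.4). Let `X ⊆ ℙ(ℂ^{d+1})` be σ-invariant and hyperbolic with
respect to the real subspace `V` of dimension `ℓ = d−k ≥ 1`. Let `V₀ ⊆ V` be real of
dimension `ℓ−1` and `π = π_{V₀}` the projection from `ℙ(V₀)` onto `ℙ(V₀ᗮ)`. Then `π(X)`
is hyperbolic with respect to the real point `π(V) = ℙ(V ∩ V₀ᗮ)`: `π(V) ∉ π(X)`, and for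
every real 2-dimensional subspace `U'` of `V₀ᗮ` containing `V ∩ V₀ᗮ` (i.e. every real
projective line through `π(V)`), every point of `π(X) ∩ ℙ(U')` is real.
-/

section Aux

variable {d : ℕ}

lemma conjE_add (x y : EE d) : conjE (x + y) = conjE x + conjE y := by
  ext i; simp [conjE]

lemma conjE_sub (x y : EE d) : conjE (x - y) = conjE x - conjE y := by
  ext i; simp [conjE]

lemma inner_conjE (x y : EE d) :
    (inner ℂ x (conjE y) : ℂ) = (starRingEnd ℂ) (inner ℂ (conjE x) y : ℂ) := by
  simp only [PiLp.inner_apply, conjE, map_sum, map_mul, RingHomCompTriple.comp_apply,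
    RingHom.id_apply]
  simp [mul_comm]

lemma orth_real {V : Submodule ℂ (EE d)} (h : IsRealSub V) : IsRealSub Vᗮ := by
  intro y hy
  rw [Submodule.mem_orthogonal] at hy ⊢
  intro u hu
  rw [inner_conjE, hy (conjE u) (h u hu), map_zero]

lemma sub_projPerp_mem (V₀ : Submodule ℂ (EE d)) (x : EE d) :
    x - projPerp V₀ x ∈ V₀ := by
  have := Submodule.sub_starProjection_mem_orthogonal (K := V₀ᗮ) x
  rwa [Submodule.orthogonal_orthogonal] at this

lemma conjE_projPerp {V₀ : Submodule ℂ (EE d)} (h : IsRealSub V₀) (x : EE d) :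
    conjE (projPerp V₀ x) = projPerp V₀ (conjE x) := by
  symm
  show V₀ᗮ.starProjection (conjE x) = _
  apply Submodule.eq_starProjection_of_mem_orthogonal
  · exact orth_real h _ (V₀ᗮ.orthogonalProjectionOnto x).2
  · rw [Submodule.orthogonal_orthogonal]
    have : conjE x - conjE (projPerp V₀ x) = conjE (x - projPerp V₀ x) := by
      rw [conjE_sub]
    rw [this]
    exact h _ (sub_projPerp_mem V₀ x)

lemma conjE_smul (c : ℂ) (x : EE d) :
    conjE (c • x) = (starRingEnd ℂ) c • conjE x := by
  ext i; simp [conjE]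

end Aux

theorem stmt10 (d ℓ : ℕ) (hℓ1 : 1 ≤ ℓ) (hℓ2 : ℓ ≤ d)
    (X : Set (EE d)) (hXcone : IsProjCone X) (hXσ : IsSigmaInv X)
    (V : Submodule ℂ (EE d)) (hVreal : IsRealSub V)
    (hVdim : Module.finrank ℂ V = ℓ)
    (hhyp : Hyperbolic X V)
    (V₀ : Submodule ℂ (EE d)) (hV₀le : V₀ ≤ V) (hV₀real : IsRealSub V₀)
    (hV₀dim : Module.finrank ℂ V₀ = ℓ - 1) :
    (∀ y ∈ projPerp V₀ '' X, y ∉ V ⊓ V₀ᗮ) ∧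
      ∀ U' : Submodule ℂ (EE d), U' ≤ V₀ᗮ → V ⊓ V₀ᗮ ≤ U' →
        Module.finrank ℂ U' = 2 → IsRealSub U' →
        ∀ y ∈ projPerp V₀ '' X, y ∈ U' → IsRealPt y := by

  have hdecomp : ∀ x : EE d, x = (x - projPerp V₀ x) + projPerp V₀ x := by
    intro x; abel
  constructor
  · rintro y ⟨x, hx, rfl⟩ hy
    apply hhyp.1 x hx
    have h1 : x - projPerp V₀ x ∈ V := hV₀le (sub_projPerp_mem V₀ x)
    have := V.add_mem h1 hy.1
    rwa [sub_add_cancel] at this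
  · rintro U' hU'le hVU' hU'dim hU'real y ⟨x, hx, rfl⟩ hy
    set U : Submodule ℂ (EE d) := V₀ ⊔ U' with hU
    have hbot : V₀ ⊓ U' = ⊥ := by
      rw [eq_bot_iff]
      intro z hz
      have : z ∈ V₀ ⊓ V₀ᗮ := ⟨hz.1, hU'le hz.2⟩
      rwa [Submodule.inf_orthogonal_eq_bot] at this
    have hdim : Module.finrank ℂ U = Module.finrank ℂ V + 1 := by
      have := Submodule.finrank_sup_add_finrank_inf_eq V₀ U'
      rw [hbot] at this
      simp only [finrank_bot, add_zero] at this
      rw [hU, this, hV₀dim, hU'dim, hVdim]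
      omega
    have hVle : V ≤ U := by
      intro v hv
      have h1 : v - projPerp V₀ v ∈ V₀ := sub_projPerp_mem V₀ v
      have h2 : projPerp V₀ v ∈ U' := by
        apply hVU'
        refine ⟨?_, (V₀ᗮ.orthogonalProjectionOnto v).2⟩
        have : v - (v - projPerp V₀ v) ∈ V := V.sub_mem hv (hV₀le h1)
        simpa using this
      have := U.add_mem (Submodule.mem_sup_left h1) (Submodule.mem_sup_right h2)
      rwa [sub_add_cancel] at this
    have hUreal : IsRealSub U := by
      intro z hz
      rcases Submodule.mem_sup.1 hz with ⟨a, ha, b, hb, rfl⟩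
      rw [conjE_add]
      exact U.add_mem (Submodule.mem_sup_left (hV₀real a ha))
        (Submodule.mem_sup_right (hU'real b hb))
    have hxU : x ∈ U := by
      have := U.add_mem (Submodule.mem_sup_left (sub_projPerp_mem V₀ x))
        (Submodule.mem_sup_right hy)
      rwa [sub_add_cancel] at this
    obtain ⟨c, hc⟩ := hhyp.2 U le_top hVle hdim hUreal x hx hxU
    refine ⟨c, ?_⟩
    rw [conjE_projPerp hV₀real, hc]
    show (V₀ᗮ.orthogonalProjectionOnto (c • x) : EE d) = _
    rw [map_smul]
    rfl
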